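/- lim_{R→∞} (1/R²) ∫₀^R ∫₀^R I₀(2√(xy)) e^{-x-y} |x - y| dy dx = 0, where I₀ is the modified Bessel function of order zero. -/

import Mathlib

open MeasureTheory Real Filter

/-- The modified Bessel function of the first kind of order zero. -/
noncomputable def besselI0 (z : ℝ) : ℝ :=
  ∑' k : ℕ, (z / 2) ^ (2 * k) / ((Nat.factorial k : ℝ)) ^ 2

section Aux
open Set ENNReal

lemma gamma_int (n : ℕ) : ∫ y in Ioi (0:ℝ), y ^ n * Real.exp (-y) = (Nat.factorial n : ℝ) := by
  have h := Real.Gamma_eq_integral (s := (n:ℝ) + 1) (by positivity)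
  rw [Real.Gamma_nat_eq_factorial] at h
  rw [h]
  apply setIntegral_congr_fun measurableSet_Ioi
  intro y _
  simp [add_sub_cancel_right, Real.rpow_natCast, mul_comm]

lemma gamma_integrable (n : ℕ) :
    IntegrableOn (fun y => y ^ n * Real.exp (-y)) (Ioi (0:ℝ)) := by
  have h := Real.GammaIntegral_convergent (s := (n:ℝ) + 1) (by positivity)
  refine h.congr_fun ?_ measurableSet_Ioi
  intro y _
  simp [add_sub_cancel_right, Real.rpow_natCast, mul_comm]

lemma exp_tsum (x : ℝ) : ∑' k : ℕ, x ^ k / (Nat.factorial k : ℝ) = Real.exp x := by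
  rw [Real.exp_eq_exp_ℝ, NormedSpace.exp_eq_tsum_div]

lemma summable_base (x : ℝ) : Summable (fun k : ℕ => x ^ k / (Nat.factorial k : ℝ)) :=
  Real.summable_pow_div_factorial x

lemma summable_k (x : ℝ) : Summable (fun k : ℕ => (k : ℝ) * x ^ k / (Nat.factorial k : ℝ)) := by
  rw [← summable_nat_add_iff 1]
  have : (fun k : ℕ => ((k+1 : ℕ) : ℝ) * x ^ (k+1) / (Nat.factorial (k+1) : ℝ))
      = fun k : ℕ => x * (x ^ k / (Nat.factorial k : ℝ)) := by
    funext k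
    rw [Nat.factorial_succ]
    push_cast
    have hk : (Nat.factorial k : ℝ) ≠ 0 := by positivity
    field_simp
    ring
  rw [this]
  exact (summable_base x).mul_left x

lemma tsum_k (x : ℝ) : ∑' k : ℕ, (k : ℝ) * x ^ k / (Nat.factorial k : ℝ) = x * Real.exp x := by
  rw [Summable.tsum_eq_zero_add (summable_k x)]
  simp only [Nat.cast_zero, zero_mul, pow_zero, Nat.factorial_zero, Nat.cast_one, zero_div, zero_add]
  have : (fun k : ℕ => ((k+1 : ℕ) : ℝ) * x ^ (k+1) / (Nat.factorial (k+1) : ℝ))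
      = fun k : ℕ => x * (x ^ k / (Nat.factorial k : ℝ)) := by
    funext k
    rw [Nat.factorial_succ]
    push_cast
    have hk : (Nat.factorial k : ℝ) ≠ 0 := by positivity
    field_simp
    ring
  push_cast
  rw [show (fun k : ℕ => ((k:ℝ)+1) * x ^ (k+1) / (Nat.factorial (k+1) : ℝ))
      = fun k : ℕ => x * (x ^ k / (Nat.factorial k : ℝ)) by
    funext k
    rw [Nat.factorial_succ]
    push_cast
    have hk : (Nat.factorial k : ℝ) ≠ 0 := by positivity
    field_simp
    ring]
  rw [tsum_mul_left, exp_tsum]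

lemma shift2_eq (x : ℝ) : (fun k : ℕ => ((k+2 : ℕ) : ℝ) * (((k+2 : ℕ) : ℝ) - 1) * x ^ (k+2) / (Nat.factorial (k+2) : ℝ))
    = fun k : ℕ => x ^ 2 * (x ^ k / (Nat.factorial k : ℝ)) := by
  funext k
  rw [show k + 2 = (k+1) + 1 by ring, Nat.factorial_succ, Nat.factorial_succ]
  push_cast
  have hk : (Nat.factorial k : ℝ) ≠ 0 := by positivity
  field_simp
  ring

lemma summable_kk (x : ℝ) : Summable (fun k : ℕ => (k : ℝ) * ((k:ℝ) - 1) * x ^ k / (Nat.factorial k : ℝ)) := by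
  rw [← summable_nat_add_iff 2]
  rw [show (fun k : ℕ => ((k+2:ℕ) : ℝ) * (((k+2:ℕ):ℝ) - 1) * x ^ (k+2) / (Nat.factorial (k+2) : ℝ)) = _ from shift2_eq x]
  exact (summable_base x).mul_left _

lemma tsum_kk (x : ℝ) : ∑' k : ℕ, (k : ℝ) * ((k:ℝ) - 1) * x ^ k / (Nat.factorial k : ℝ) = x ^ 2 * Real.exp x := by
  rw [Summable.tsum_eq_zero_add (summable_kk x)]
  rw [Summable.tsum_eq_zero_add (by rw [← summable_nat_add_iff 1]; exact (summable_nat_add_iff 2).2 (summable_kk x))]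
  simp only [Nat.cast_zero, Nat.cast_one, Nat.cast_add]
  norm_num
  rw [show (fun k : ℕ => ((k:ℝ)+1+1) * ((k:ℝ)+1) * x ^ (k+1+1) / (Nat.factorial (k+1+1) : ℝ))
      = fun k : ℕ => x ^ 2 * (x ^ k / (Nat.factorial k : ℝ)) by
    funext k
    rw [show k + 1 + 1 = (k+1) + 1 from rfl, Nat.factorial_succ, Nat.factorial_succ]
    push_cast
    have hk : (Nat.factorial k : ℝ) ≠ 0 := by positivity
    field_simp
    ring]
  rw [tsum_mul_left, exp_tsum]

lemma key_hrw (x c : ℝ) : (fun k : ℕ => x ^ k / (Nat.factorial k : ℝ) * ((x - ((k:ℝ)+1))^2 + ((k:ℝ)+1) + c^2))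
      = fun k : ℕ => ((k:ℝ) * ((k:ℝ)-1) * x ^ k / (Nat.factorial k : ℝ)
          + (x^2 - 2*x + 2 + c^2) * (x ^ k / (Nat.factorial k : ℝ)))
          + (4 - 2*x) * ((k:ℝ) * x ^ k / (Nat.factorial k : ℝ)) := by
    funext k
    field_simp
    ring

lemma key_tsum (x c : ℝ) :
    ∑' k : ℕ, x ^ k / (Nat.factorial k : ℝ) * ((x - ((k:ℝ)+1))^2 + ((k:ℝ)+1) + c^2)
      = Real.exp x * (2*x + 2 + c^2) := by
  rw [key_hrw, Summable.tsum_add (((summable_kk x).add ((summable_base x).mul_left _)))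
      ((summable_k x).mul_left _),
    Summable.tsum_add (summable_kk x) ((summable_base x).mul_left _), tsum_mul_left, tsum_mul_left,
    tsum_kk, tsum_k, exp_tsum]
  ring

lemma summable_key (x c : ℝ) :
    Summable (fun k : ℕ => x ^ k / (Nat.factorial k : ℝ) * ((x - ((k:ℝ)+1))^2 + ((k:ℝ)+1) + c^2)) := by
  rw [key_hrw]
  exact ((summable_kk x).add ((summable_base x).mul_left _)).add ((summable_k x).mul_left _)

lemma m_integrable (k : ℕ) (x c : ℝ) :
    IntegrableOn (fun y : ℝ => y ^ k * Real.exp (-y) * (((x - y)^2 + c^2)/(2*c))) (Ioi (0:ℝ)) := by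
  have h : (fun y : ℝ => y ^ k * Real.exp (-y) * (((x - y)^2 + c^2)/(2*c)))
      = fun y => (1/(2*c)) * (y^(k+2) * Real.exp (-y)) + (-(x/c)) * (y^(k+1) * Real.exp (-y))
          + ((x^2+c^2)/(2*c)) * (y^k * Real.exp (-y)) := by
    funext y; ring
  rw [h]
  exact (((gamma_integrable (k+2)).const_mul _).add ((gamma_integrable (k+1)).const_mul _)).add
    ((gamma_integrable k).const_mul _)

lemma m_integral (k : ℕ) (x c : ℝ) (hc : c ≠ 0) :
    ∫ y in Ioi (0:ℝ), y ^ k * Real.exp (-y) * (((x - y)^2 + c^2)/(2*c))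
      = (Nat.factorial k : ℝ) * ((x - ((k:ℝ)+1))^2 + ((k:ℝ)+1) + c^2) / (2*c) := by
  have h : (fun y : ℝ => y ^ k * Real.exp (-y) * (((x - y)^2 + c^2)/(2*c)))
      = fun y => (1/(2*c)) * (y^(k+2) * Real.exp (-y)) + (-(x/c)) * (y^(k+1) * Real.exp (-y))
          + ((x^2+c^2)/(2*c)) * (y^k * Real.exp (-y)) := by
    funext y; ring
  have I1 : Integrable (fun y : ℝ => 1/(2*c) * (y^(k+2) * Real.exp (-y))) (volume.restrict (Ioi 0)) :=
    (gamma_integrable (k+2)).const_mul _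
  have I2 : Integrable (fun y : ℝ => -(x/c) * (y^(k+1) * Real.exp (-y))) (volume.restrict (Ioi 0)) :=
    (gamma_integrable (k+1)).const_mul _
  have I3 : Integrable (fun y : ℝ => (x^2+c^2)/(2*c) * (y^k * Real.exp (-y))) (volume.restrict (Ioi 0)) :=
    (gamma_integrable k).const_mul _
  have I12 : Integrable (fun y : ℝ => 1/(2*c) * (y^(k+2) * Real.exp (-y)) + -(x/c) * (y^(k+1) * Real.exp (-y))) (volume.restrict (Ioi 0)) := I1.add I2
  rw [h, integral_add I12 I3, integral_add I1 I2,
    integral_const_mul, integral_const_mul, integral_const_mul, gamma_int, gamma_int, gamma_int]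
  rw [show k + 2 = (k+1)+1 from rfl, Nat.factorial_succ, Nat.factorial_succ]
  push_cast
  field_simp
  ring

lemma moment_bound (k : ℕ) (x c R : ℝ) (hc : 0 < c) :
    ∫ y in Ioc (0:ℝ) R, y ^ k * Real.exp (-y) * |x - y|
      ≤ (Nat.factorial k : ℝ) * ((x - ((k:ℝ)+1))^2 + ((k:ℝ)+1) + c^2) / (2*c) := by
  have habs : ∀ y : ℝ, |x - y| ≤ ((x - y)^2 + c^2)/(2*c) := by
    intro y
    rw [le_div_iff₀ (by positivity)]
    nlinarith [sq_nonneg (|x - y| - c), sq_abs (x - y), abs_nonneg (x - y)]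
  have h1 : ∫ y in Ioc (0:ℝ) R, y ^ k * Real.exp (-y) * |x - y|
      ≤ ∫ y in Ioc (0:ℝ) R, y ^ k * Real.exp (-y) * (((x - y)^2 + c^2)/(2*c)) := by
    apply setIntegral_mono_on
    · apply Continuous.integrableOn_Ioc
      continuity
    · exact (m_integrable k x c).mono_set Ioc_subset_Ioi_self
    · exact measurableSet_Ioc
    · intro y hy
      have hy0 : 0 ≤ y := le_of_lt hy.1
      have : 0 ≤ y ^ k * Real.exp (-y) := by positivity
      exact mul_le_mul_of_nonneg_left (habs y) this
  have h2 : ∫ y in Ioc (0:ℝ) R, y ^ k * Real.exp (-y) * (((x - y)^2 + c^2)/(2*c))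
      ≤ ∫ y in Ioi (0:ℝ), y ^ k * Real.exp (-y) * (((x - y)^2 + c^2)/(2*c)) := by
    apply setIntegral_mono_set (m_integrable k x c)
    · rw [EventuallyLE, ae_restrict_iff' measurableSet_Ioi]
      filter_upwards with y hy
      have hy0 : 0 ≤ y := le_of_lt hy
      positivity
    · exact HasSubset.Subset.eventuallyLE Ioc_subset_Ioi_self
  calc _ ≤ _ := h1
    _ ≤ _ := h2
    _ = _ := m_integral k x c hc.ne'

lemma besselI0_nonneg (z : ℝ) : 0 ≤ besselI0 z := by
  apply tsum_nonneg
  intro k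
  rw [pow_mul]
  positivity

lemma besselI0_eq {w : ℝ} (hw : 0 ≤ w) :
    besselI0 (2 * Real.sqrt w) = ∑' k : ℕ, w ^ k / (Nat.factorial k : ℝ) ^ 2 := by
  unfold besselI0
  congr 1
  funext k
  have h2 : (2 * Real.sqrt w) / 2 = Real.sqrt w := by ring
  rw [h2, pow_mul, Real.sq_sqrt hw]

lemma summable_sq {w : ℝ} (hw : 0 ≤ w) :
    Summable (fun k : ℕ => w ^ k / (Nat.factorial k : ℝ) ^ 2) := by
  apply Summable.of_nonneg_of_le (fun k => by positivity) (fun k => ?_) (summable_base w)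
  apply div_le_div_of_nonneg_left (by positivity) (by positivity)
  have h1 : (1:ℝ) ≤ (Nat.factorial k : ℝ) := by exact_mod_cast Nat.one_le_iff_ne_zero.2 (Nat.factorial_ne_zero k)
  nlinarith

lemma term_bound (k : ℕ) (x c R : ℝ) (hx : 0 ≤ x) (hc : 0 < c) :
    ∫ y in Ioc (0:ℝ) R, (x*y) ^ k / (Nat.factorial k : ℝ)^2 * Real.exp (-x-y) * |x - y|
      ≤ Real.exp (-x) / (2*c) * (x ^ k / (Nat.factorial k : ℝ) * ((x - ((k:ℝ)+1))^2 + ((k:ℝ)+1) + c^2)) := by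
  have hk : (0:ℝ) < (Nat.factorial k : ℝ) := by positivity
  calc ∫ y in Ioc (0:ℝ) R, (x*y) ^ k / (Nat.factorial k : ℝ)^2 * Real.exp (-x-y) * |x - y|
      = (x ^ k / (Nat.factorial k : ℝ)^2 * Real.exp (-x)) *
          ∫ y in Ioc (0:ℝ) R, y ^ k * Real.exp (-y) * |x - y| := by
        rw [← integral_const_mul]
        apply setIntegral_congr_fun measurableSet_Ioc
        intro y _
        dsimp only
        have hexp : Real.exp (-x-y) = Real.exp (-x) * Real.exp (-y) := by
          rw [← Real.exp_add]; ring_nf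
        rw [mul_pow, hexp]; ring
    _ ≤ (x ^ k / (Nat.factorial k : ℝ)^2 * Real.exp (-x)) *
          ((Nat.factorial k : ℝ) * ((x - ((k:ℝ)+1))^2 + ((k:ℝ)+1) + c^2) / (2*c)) := by
        apply mul_le_mul_of_nonneg_left (moment_bound k x c R hc) (by positivity)
    _ = Real.exp (-x) / (2*c) * (x ^ k / (Nat.factorial k : ℝ) * ((x - ((k:ℝ)+1))^2 + ((k:ℝ)+1) + c^2)) := by
        field_simp

lemma interchange (x R : ℝ) (hx : 0 ≤ x) (hR : 0 ≤ R) :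
    ∫ y in Ioc (0:ℝ) R, besselI0 (2 * Real.sqrt (x*y)) * Real.exp (-x-y) * |x - y|
      = ∑' k : ℕ, ∫ y in Ioc (0:ℝ) R, (x*y) ^ k / (Nat.factorial k : ℝ)^2 * Real.exp (-x-y) * |x - y| := by
  have hcong : ∫ y in Ioc (0:ℝ) R, besselI0 (2 * Real.sqrt (x*y)) * Real.exp (-x-y) * |x - y|
      = ∫ y in Ioc (0:ℝ) R, ∑' k : ℕ, (x*y) ^ k / (Nat.factorial k : ℝ)^2 * Real.exp (-x-y) * |x - y| := by
    apply setIntegral_congr_fun measurableSet_Ioc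
    intro y hy
    dsimp only
    rw [besselI0_eq (mul_nonneg hx hy.1.le), ← tsum_mul_right, ← tsum_mul_right]
  rw [hcong]
  apply integral_tsum
  · intro k
    apply Continuous.aestronglyMeasurable
    continuity
  · -- finiteness
    have hb : ∀ k : ℕ, (∫⁻ y in Ioc (0:ℝ) R, ‖(x*y) ^ k / (Nat.factorial k : ℝ)^2 * Real.exp (-x-y) * |x - y|‖₊)
        ≤ ENNReal.ofReal ((x*R) ^ k / (Nat.factorial k : ℝ)^2 * (x+R)) * ENNReal.ofReal R := by
      intro k
      have hle : ∀ y ∈ Ioc (0:ℝ) R,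
          (‖(x*y) ^ k / (Nat.factorial k : ℝ)^2 * Real.exp (-x-y) * |x - y|‖₊ : ℝ≥0∞)
            ≤ ENNReal.ofReal ((x*R) ^ k / (Nat.factorial k : ℝ)^2 * (x+R)) := by
        intro y hy
        rw [← enorm_eq_nnnorm, ← ofReal_norm]
        apply ENNReal.ofReal_le_ofReal
        have hxy : 0 ≤ x * y := mul_nonneg hx hy.1.le
        have h1 : (x*y)^k ≤ (x*R)^k := pow_le_pow_left₀ hxy (by nlinarith [hy.2, hy.1.le]) k
        have h2 : Real.exp (-x-y) ≤ 1 := Real.exp_le_one_iff.2 (by nlinarith [hy.1.le])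
        have h3 : |x - y| ≤ x + R := by
          rw [abs_le]
          constructor <;> nlinarith [hy.1.le, hy.2]
        rw [Real.norm_eq_abs, abs_of_nonneg (by positivity)]
        calc (x*y) ^ k / (Nat.factorial k : ℝ)^2 * Real.exp (-x-y) * |x - y|
            ≤ (x*R) ^ k / (Nat.factorial k : ℝ)^2 * 1 * (x+R) := by
              apply mul_le_mul (mul_le_mul (by gcongr) h2 (Real.exp_nonneg _) (by positivity))
                h3 (abs_nonneg _) (by positivity)
          _ = (x*R) ^ k / (Nat.factorial k : ℝ)^2 * (x+R) := by ring
      calc (∫⁻ y in Ioc (0:ℝ) R, ‖(x*y) ^ k / (Nat.factorial k : ℝ)^2 * Real.exp (-x-y) * |x - y|‖₊)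
          ≤ ∫⁻ _y in Ioc (0:ℝ) R, ENNReal.ofReal ((x*R) ^ k / (Nat.factorial k : ℝ)^2 * (x+R)) :=
            setLIntegral_mono measurable_const hle
        _ = ENNReal.ofReal ((x*R) ^ k / (Nat.factorial k : ℝ)^2 * (x+R)) * volume (Ioc (0:ℝ) R) := by
            rw [setLIntegral_const]
        _ ≤ ENNReal.ofReal ((x*R) ^ k / (Nat.factorial k : ℝ)^2 * (x+R)) * ENNReal.ofReal R := by
            rw [Real.volume_Ioc]
            gcongr
            linarith
    apply ne_of_lt
    calc ∑' k : ℕ, (∫⁻ y in Ioc (0:ℝ) R, ‖(x*y) ^ k / (Nat.factorial k : ℝ)^2 * Real.exp (-x-y) * |x - y|‖₊)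
        ≤ ∑' k : ℕ, ENNReal.ofReal ((x*R) ^ k / (Nat.factorial k : ℝ)^2 * (x+R)) * ENNReal.ofReal R :=
          ENNReal.tsum_le_tsum hb
      _ = (∑' k : ℕ, ENNReal.ofReal ((x*R) ^ k / (Nat.factorial k : ℝ)^2 * (x+R))) * ENNReal.ofReal R :=
          ENNReal.tsum_mul_right
      _ = ENNReal.ofReal (∑' k : ℕ, (x*R) ^ k / (Nat.factorial k : ℝ)^2 * (x+R)) * ENNReal.ofReal R := by
          rw [ENNReal.ofReal_tsum_of_nonneg (fun k => by positivity)
            ((summable_sq (mul_nonneg hx hR)).mul_right _)]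
      _ < ⊤ := by
          exact ENNReal.mul_lt_top ENNReal.ofReal_lt_top ENNReal.ofReal_lt_top

lemma inner_le (x R : ℝ) (hx : 0 ≤ x) (hR : 0 ≤ R) :
    ∫ y in Ioc (0:ℝ) R, besselI0 (2 * Real.sqrt (x*y)) * Real.exp (-x-y) * |x - y|
      ≤ Real.sqrt (2*x+2) := by
  set c := Real.sqrt (2*x+2) with hcdef
  have hc : 0 < c := Real.sqrt_pos.2 (by linarith)
  have hc2 : c^2 = 2*x+2 := Real.sq_sqrt (by linarith)
  rw [interchange x R hx hR]
  have hterm := fun k => term_bound k x c R hx hc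
  have hsummB : Summable (fun k : ℕ => Real.exp (-x) / (2*c) *
      (x ^ k / (Nat.factorial k : ℝ) * ((x - ((k:ℝ)+1))^2 + ((k:ℝ)+1) + c^2))) :=
    (summable_key x c).mul_left _
  have hsummA : Summable (fun k : ℕ =>
      ∫ y in Ioc (0:ℝ) R, (x*y) ^ k / (Nat.factorial k : ℝ)^2 * Real.exp (-x-y) * |x - y|) := by
    apply Summable.of_nonneg_of_le (fun k => ?_) hterm hsummB
    apply setIntegral_nonneg measurableSet_Ioc
    intro y hy
    have hxy : 0 ≤ x * y := mul_nonneg hx hy.1.le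
    positivity
  calc ∑' k : ℕ, ∫ y in Ioc (0:ℝ) R, (x*y) ^ k / (Nat.factorial k : ℝ)^2 * Real.exp (-x-y) * |x - y|
      ≤ ∑' k : ℕ, Real.exp (-x) / (2*c) *
          (x ^ k / (Nat.factorial k : ℝ) * ((x - ((k:ℝ)+1))^2 + ((k:ℝ)+1) + c^2)) :=
        hsummA.tsum_le_tsum hterm hsummB
    _ = Real.exp (-x) / (2*c) * (Real.exp x * (2*x + 2 + c^2)) := by
        rw [tsum_mul_left, key_tsum]
    _ = c := by
        rw [hc2, Real.exp_neg]
        have he : Real.exp x ≠ 0 := Real.exp_ne_zero x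
        field_simp
        linear_combination (-1 : ℝ) * hc2


end Aux

section Main
open Set ENNReal
theorem stmt_13 :
    Filter.Tendsto
      (fun R : ℝ => (1 / R ^ 2) * ∫ x in (0:ℝ)..R, ∫ y in (0:ℝ)..R,
        besselI0 (2 * Real.sqrt (x * y)) * Real.exp (-x - y) * |x - y|)
      Filter.atTop (nhds 0) := by
  have hsqrt4 : Real.sqrt 4 = 2 := by
    rw [show (4:ℝ) = 2^2 by norm_num, Real.sqrt_sq (by norm_num)]
  have hg : Filter.Tendsto (fun R : ℝ => 2 / Real.sqrt R) atTop (nhds 0) := by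
    apply Filter.Tendsto.div_atTop tendsto_const_nhds
    have h := tendsto_rpow_atTop (y := (1/2:ℝ)) (by norm_num)
    apply h.congr'
    filter_upwards with x
    rw [← Real.sqrt_eq_rpow]
  refine squeeze_zero_norm' ?_ hg
  · filter_upwards [eventually_ge_atTop (1:ℝ)] with R hR1
    have hR0 : (0:ℝ) < R := by linarith
    have hsR : 0 < Real.sqrt R := Real.sqrt_pos.2 hR0
    have hinner : ∀ x ∈ Set.uIoc (0:ℝ) R,
        ‖∫ y in (0:ℝ)..R, besselI0 (2 * Real.sqrt (x * y)) * Real.exp (-x - y) * |x - y|‖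
          ≤ Real.sqrt (2*R+2) := by
      intro x hxmem
      rw [Set.uIoc_of_le hR0.le] at hxmem
      have hloc : ∫ y in (0:ℝ)..R, besselI0 (2 * Real.sqrt (x * y)) * Real.exp (-x - y) * |x - y|
          = ∫ y in Ioc (0:ℝ) R, besselI0 (2 * Real.sqrt (x * y)) * Real.exp (-x - y) * |x - y| := by
        rw [intervalIntegral.integral_of_le hR0.le, MeasureTheory.integral_Ioc_eq_integral_Ioo,
          ← MeasureTheory.integral_Ioc_eq_integral_Ioo]
      have hnn : 0 ≤ ∫ y in Ioc (0:ℝ) R, besselI0 (2 * Real.sqrt (x * y)) * Real.exp (-x - y) * |x - y| := by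
        apply setIntegral_nonneg measurableSet_Ioc
        intro y _
        exact mul_nonneg (mul_nonneg (besselI0_nonneg _) (Real.exp_nonneg _)) (abs_nonneg _)
      rw [hloc, Real.norm_eq_abs, abs_of_nonneg hnn]
      exact (inner_le x R hxmem.1.le hR0.le).trans (Real.sqrt_le_sqrt (by linarith [hxmem.2]))
    have houter := intervalIntegral.norm_integral_le_of_norm_le_const hinner
    rw [norm_mul]
    calc ‖1/R^2‖ * ‖∫ x in (0:ℝ)..R, ∫ y in (0:ℝ)..R,
          besselI0 (2 * Real.sqrt (x * y)) * Real.exp (-x - y) * |x - y|‖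
        ≤ (1/R^2) * (Real.sqrt (2*R+2) * |R - 0|) := by
          apply mul_le_mul_of_nonneg_left houter ?_ |>.trans_eq' ?_
          · positivity
          · rw [Real.norm_eq_abs, Real.norm_eq_abs, abs_of_nonneg (by positivity : (0:ℝ) ≤ 1/R^2)]
      _ ≤ (1/R^2) * ((2 * Real.sqrt R) * R) := by
          apply mul_le_mul_of_nonneg_left _ (by positivity)
          rw [show |R - (0:ℝ)| = R by rw [sub_zero, abs_of_nonneg hR0.le]]
          apply mul_le_mul_of_nonneg_right _ hR0.le
          calc Real.sqrt (2*R+2) ≤ Real.sqrt (4*R) := Real.sqrt_le_sqrt (by linarith)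
            _ = 2 * Real.sqrt R := by rw [Real.sqrt_mul (by norm_num), hsqrt4]
      _ = 2 / Real.sqrt R := by
          have hss : Real.sqrt R * Real.sqrt R = R := Real.mul_self_sqrt hR0.le
          have h1 : (1/R^2) * ((2*Real.sqrt R)*R) = 2 * Real.sqrt R / R := by
            field_simp [hR0.ne']
          rw [h1, div_eq_div_iff hR0.ne' hsR.ne']
          linear_combination 2*hss

end Main
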